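/- arXiv:1809.09411 — 2 statements merged into one kernel-verified Lean document; each statement's English description precedes it below -/
import Mathlib

section
/- Let Ŵ and E be independent real random variables, exponentially distributed with means σ̂2² > 0 and σ_{e2}² > 0 respectively. Let P1, P2, N0, γ̄2 > 0 with λ_P := P2/P1 > γ̄2. Then P{ Ŵ·P2/(Ŵ·P1 + E·(P1+P2) + N0) < γ̄2 } = 1 − (1 + χ·(1+λ_P)·σ_{e2}²/σ̂2²)^{−1} · exp(−χ/ρ12), where χ = γ̄2/(λ_P − γ̄2) and ρ12 = P1·σ̂2²/N0. -/
open MeasureTheory ProbabilityTheory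

noncomputable def expMean (a : ℝ) : Measure ℝ :=
  volume.withDensity fun x => ENNReal.ofReal (if 0 ≤ x then (1 / a) * Real.exp (-x / a) else 0)

lemma expMean_eq (a : ℝ) : expMean a = expMeasure (1 / a) := by
  rw [expMean, expMeasure, gammaMeasure]
  congr 1
  funext x
  rw [show gammaPDF 1 (1 / a) x = exponentialPDF (1 / a) x from rfl, exponentialPDF_eq]
  congr 1
  split_ifs with h
  · congr 1; ring
  · rfl

lemma expMean_prob {a : ℝ} (ha : 0 < a) : IsProbabilityMeasure (expMean a) := by
  rw [expMean_eq]; exact isProbabilityMeasure_expMeasure (by positivity)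

lemma expMean_Iic {a x : ℝ} (ha : 0 < a) (hx : 0 ≤ x) :
    expMean a (Set.Iic x) = ENNReal.ofReal (1 - Real.exp (-x / a)) := by
  rw [expMean_eq, expMeasure, gammaMeasure, withDensity_apply _ measurableSet_Iic,
    show gammaPDF 1 (1 / a) = exponentialPDF (1 / a) from rfl,
    lintegral_exponentialPDF_eq_antiDeriv (by positivity) x, if_pos hx]
  congr 2
  ring

lemma expMean_Iio {a x : ℝ} (ha : 0 < a) (hx : 0 ≤ x) :
    expMean a (Set.Iio x) = ENNReal.ofReal (1 - Real.exp (-x / a)) := by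
  have h0 : expMean a {x} = 0 := by
    rw [expMean, withDensity_apply _ (measurableSet_singleton x),
      setLIntegral_measure_zero _ _ (measure_singleton x)]
  have hIio : Set.Iio x = Set.Iic x \ {x} := by
    ext y; simp [lt_iff_le_and_ne]
  rw [hIio, measure_diff_null h0, expMean_Iic ha hx]

lemma expMean_nonneg_ae {a : ℝ} : ∀ᵐ x ∂(expMean a), 0 ≤ x := by
  rw [ae_iff]
  have hset : {x : ℝ | ¬0 ≤ x} = Set.Iio 0 := by ext y; simp [not_le]
  rw [hset, expMean, withDensity_apply _ measurableSet_Iio]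
  rw [setLIntegral_congr_fun (g := fun _ => 0) measurableSet_Iio
    (fun y (hy : y < 0) => by simp [not_le.mpr hy]), lintegral_zero]

set_option maxHeartbeats 1000000 in
/-- Lemma 1, eq. (12): outage probability of the far user UE2 in
Case 1 (no relaying).  `W = |ĥ2|²` and `E = |e2|²` are independent exponentials
with means `σh2 = σ̂2²` and `σe2 = σ_{e2}²`.  With `λ_P = P2/P1 > γ̄2`,
`χ = γ̄2/(λ_P − γ̄2)` and `ρ12 = P1·σ̂2²/N0`,
`P{W·P2/(W·P1 + E·(P1+P2) + N0) < γ̄2} = 1 − (1 + χ·(1+λ_P)·σe2/σh2)⁻¹·exp(−χ/ρ12)`. -/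
theorem stmt_3 {Ω : Type*} [MeasurableSpace Ω] (P : Measure Ω) [IsProbabilityMeasure P]
    (W E : Ω → ℝ) (σh2 σe2 P1 P2 N0 γ2 : ℝ)
    (hσh2 : 0 < σh2) (hσe2 : 0 < σe2)
    (hP1 : 0 < P1) (hP2 : 0 < P2) (hN0 : 0 < N0) (hγ2 : 0 < γ2)
    (hlam : γ2 < P2 / P1)
    (hind : IndepFun W E P)
    (hW : P.map W = expMean σh2) (hE : P.map E = expMean σe2)
    (lamP χ ρ12 : ℝ)
    (hlamP : lamP = P2 / P1) (hχ : χ = γ2 / (lamP - γ2)) (hρ12 : ρ12 = P1 * σh2 / N0) :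
    (P {ω | W ω * P2 / (W ω * P1 + E ω * (P1 + P2) + N0) < γ2}).toReal =
      1 - (1 + χ * (1 + lamP) * σe2 / σh2)⁻¹ * Real.exp (-χ / ρ12) := by
  have hd : 0 < P2 - γ2 * P1 := by
    have := (lt_div_iff₀ hP1).mp hlam
    linarith
  -- abbreviations
  set c : ℝ → ℝ := fun e => γ2 * (e * (P1 + P2) + N0) / (P2 - γ2 * P1) with hc_def
  set a : ℝ := γ2 * (P1 + P2) / ((P2 - γ2 * P1) * σh2) with ha_def
  set b : ℝ := γ2 * N0 / ((P2 - γ2 * P1) * σh2) with hb_def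
  set r2 : ℝ := 1 / σe2 with hr2_def
  set r' : ℝ := a + r2 with hr'_def
  set K : ℝ := Real.exp (-b) * r2 / r' with hK_def
  clear_value K r' r2 b a c
  have ha0 : 0 < a := by rw [ha_def]; positivity
  have hb0 : 0 ≤ b := by rw [hb_def]; positivity
  have hr2 : 0 < r2 := by rw [hr2_def]; positivity
  have hr' : 0 < r' := by rw [hr'_def]; linarith
  have hK0 : 0 ≤ K := by
    rw [hK_def]
    exact div_nonneg (mul_nonneg (Real.exp_nonneg _) hr2.le) hr'.le
  have hK1 : K ≤ 1 := by
    have h1 : Real.exp (-b) ≤ 1 := Real.exp_le_one_iff.mpr (neg_nonpos.mpr hb0)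
    have h2 : r2 / r' ≤ 1 := (div_le_one hr').mpr (by rw [hr'_def]; linarith)
    rw [hK_def]
    calc Real.exp (-b) * r2 / r' = Real.exp (-b) * (r2 / r') := by ring
      _ ≤ 1 := mul_le_one₀ h1 (by positivity) h2
  -- measurability of W and E
  haveI : IsProbabilityMeasure (expMean σh2) := expMean_prob hσh2
  haveI : IsProbabilityMeasure (expMean σe2) := expMean_prob hσe2
  have hWm : AEMeasurable W P := by
    by_contra h
    rw [Measure.map_of_not_aemeasurable h] at hW
    have h1 : (0 : Measure ℝ) Set.univ = 1 := by rw [hW]; exact measure_univ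
    simp at h1
  have hEm : AEMeasurable E P := by
    by_contra h
    rw [Measure.map_of_not_aemeasurable h] at hE
    have h1 : (0 : Measure ℝ) Set.univ = 1 := by rw [hE]; exact measure_univ
    simp at h1
  have hmap : P.map (fun ω => (W ω, E ω)) = (expMean σh2).prod (expMean σe2) := by
    rw [← hW, ← hE]
    exact (indepFun_iff_map_prod_eq_prod_map_map hWm hEm).mp hind
  set S : Set (ℝ × ℝ) := {p : ℝ × ℝ | p.1 * P2 / (p.1 * P1 + p.2 * (P1 + P2) + N0) < γ2}
    with hS_def
  have hSm : MeasurableSet S := by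
    apply measurableSet_lt _ measurable_const
    fun_prop
  have hPev : P {ω | W ω * P2 / (W ω * P1 + E ω * (P1 + P2) + N0) < γ2}
      = ((expMean σh2).prod (expMean σe2)) S := by
    rw [← hmap, Measure.map_apply_of_aemeasurable (hWm.prodMk hEm) hSm]
    rfl
  -- slice measure
  have hslice : ∀ e : ℝ, 0 ≤ e →
      expMean σh2 ((fun w => (w, e)) ⁻¹' S)
        = ENNReal.ofReal (1 - Real.exp (-(c e) / σh2)) := by
    intro e he
    have hc : 0 ≤ c e := by
      simp only [hc_def]
      positivity
    have hae : (fun w => (w, e)) ⁻¹' S =ᵐ[expMean σh2] Set.Iio (c e) := by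
      rw [Filter.eventuallyEq_set]
      filter_upwards [expMean_nonneg_ae] with w hw
      simp only [hS_def, Set.mem_preimage, Set.mem_setOf_eq, Set.mem_Iio]
      have hden : 0 < w * P1 + e * (P1 + P2) + N0 := by positivity
      rw [div_lt_iff₀ hden]
      simp only [hc_def]
      rw [lt_div_iff₀ hd]
      constructor <;> intro h <;> nlinarith
    rw [measure_congr hae, expMean_Iio hσh2 hc]
  -- integrand measurability
  have hfm : Measurable (fun e => ENNReal.ofReal (Real.exp (-(c e) / σh2))) := by
    simp only [hc_def]
    fun_prop
  have hle : (fun e => ENNReal.ofReal (Real.exp (-(c e) / σh2)))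
      ≤ᵐ[expMean σe2] (fun _ => 1) := by
    filter_upwards [expMean_nonneg_ae] with e he
    have hc : 0 ≤ c e := by simp only [hc_def]; positivity
    refine ENNReal.ofReal_le_one.mpr (Real.exp_le_one_iff.mpr ?_)
    apply div_nonpos_of_nonpos_of_nonneg (neg_nonpos.mpr hc) hσh2.le
  have hfin : ∫⁻ e, ENNReal.ofReal (Real.exp (-(c e) / σh2)) ∂(expMean σe2) ≠ ⊤ := by
    refine ne_top_of_le_ne_top ?_ (lintegral_mono_ae hle)
    simp [lintegral_one]
  -- the key outer integral
  have hcdiv : ∀ e : ℝ, -(c e) / σh2 = -(a * e + b) := by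
    intro e
    simp only [hc_def, ha_def, hb_def]
    field_simp
  have key : ∀ e : ℝ, 0 ≤ e → r2 * Real.exp (-(r2 * e)) * Real.exp (-(c e) / σh2)
      = K * (r' * Real.exp (-(r' * e))) := by
    intro e he
    have hKr : K * r' = Real.exp (-b) * r2 := by
      rw [hK_def]; field_simp
    rw [hcdiv e, mul_assoc, ← Real.exp_add,
      show -(r2 * e) + -(a * e + b) = -b + -(r' * e) from by rw [hr'_def]; ring,
      Real.exp_add]
    linear_combination (-Real.exp (-(r' * e))) * hKr
  have hT : ∫⁻ e, ENNReal.ofReal (Real.exp (-(c e) / σh2)) ∂(expMean σe2)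
      = ENNReal.ofReal K := by
    have hgm : Measurable (gammaPDF 1 (1/σe2)) :=
      (measurable_gammaPDFReal 1 (1/σe2)).ennreal_ofReal
    rw [expMean_eq, expMeasure, gammaMeasure,
      lintegral_withDensity_eq_lintegral_mul _ hgm hfm]
    have hpt : ∀ e : ℝ, (gammaPDF 1 (1/σe2) * fun e => ENNReal.ofReal (Real.exp (-(c e) / σh2))) e
        = ENNReal.ofReal K * exponentialPDF r' e := by
      intro e
      simp only [Pi.mul_apply]
      rw [show gammaPDF 1 (1/σe2) e = exponentialPDF r2 e from by rw [hr2_def]; rfl]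
      by_cases he : 0 ≤ e
      · rw [exponentialPDF_of_nonneg he, exponentialPDF_of_nonneg he,
          ← ENNReal.ofReal_mul (by positivity), ← ENNReal.ofReal_mul hK0]
        exact congrArg _ (key e he)
      · rw [exponentialPDF_of_neg (not_le.mp he), exponentialPDF_of_neg (not_le.mp he),
          zero_mul, mul_zero]
    rw [lintegral_congr hpt, lintegral_const_mul' _ _ ENNReal.ofReal_ne_top,
      lintegral_exponentialPDF_eq_one hr', mul_one]
  -- assemble
  have hprod : ((expMean σh2).prod (expMean σe2)) S = 1 - ENNReal.ofReal K := by
    rw [Measure.prod_apply_symm hSm]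
    have step1 : ∫⁻ e, expMean σh2 ((fun w => (w, e)) ⁻¹' S) ∂(expMean σe2)
        = ∫⁻ e, (1 - ENNReal.ofReal (Real.exp (-(c e) / σh2))) ∂(expMean σe2) := by
      apply lintegral_congr_ae
      filter_upwards [expMean_nonneg_ae] with e he
      rw [hslice e he, ENNReal.ofReal_sub _ (Real.exp_nonneg _), ENNReal.ofReal_one]
    rw [step1, lintegral_sub hfm hfin hle, hT]
    simp [lintegral_one]
  rw [hPev, hprod, ENNReal.toReal_sub_of_le (ENNReal.ofReal_le_one.mpr hK1) ENNReal.one_ne_top,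
    ENNReal.toReal_one, ENNReal.toReal_ofReal hK0]
  congr 1
  subst hlamP hχ hρ12
  have h1 : P2 / P1 - γ2 ≠ 0 := by
    have : 0 < P2 / P1 - γ2 := by linarith
    exact this.ne'
  have h2 : (P2 - γ2 * P1) ≠ 0 := hd.ne'
  have h2' : P2 - P1 * γ2 ≠ 0 := by intro hh; apply h2; linarith
  have h4 : -(γ2 * P1 ^ 2 * σh2) + P1 * P2 * σh2 ≠ 0 := by
    have : 0 < P1 * σh2 * (P2 - γ2 * P1) := by positivity
    nlinarith
  have hfac : r2 / r' = (1 + γ2 / (P2 / P1 - γ2) * (1 + P2 / P1) * σe2 / σh2)⁻¹ := by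
    rw [show r2 / r' = (r' / r2)⁻¹ from (inv_div r' r2).symm]
    congr 1
    rw [hr'_def, hr2_def, ha_def]
    field_simp [h1, h2, h2', h4]
    ring
  rw [hK_def, mul_div_assoc, hfac,
    show -(γ2 / (P2 / P1 - γ2)) / (P1 * σh2 / N0) = -b from by
      rw [hb_def]
      field_simp [h1, h2, h2', h4],
    mul_comm]
end

section
/- Let Ŵ1 and E1 be independent real random variables, exponentially distributed with means σ̂1² > 0 and σ_{e1}² > 0 respectively. Let P1, P2, N0, γ̄2 > 0 with λ_P := P2/P1 > γ̄2, χ = γ̄2/(λ_P − γ̄2), ρ11 = P1·σ̂1²/N0 and μ1 = (1 + χ·(1+λ_P)·σ_{e1}²/σ̂1²)^{−1}. Then the probability that the near user fails to decode the far user's signal satisfies P{ Ŵ1·P2/(Ŵ1·P1 + E1·(P1+P2) + N0) < γ̄2 } = 1 − μ1·exp(−χ/ρ11). -/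
open MeasureTheory ProbabilityTheory Real Set

lemma expMean_density_eq {σ : ℝ} (hσ : 0 < σ) :
    (fun x => ENNReal.ofReal (if 0 ≤ x then (1 / σ) * Real.exp (-x / σ) else 0))
      = exponentialPDF σ⁻¹ := by
  funext x
  rw [exponentialPDF_eq]
  congr 1
  split_ifs with h
  · rw [one_div]
    congr 2
    field_simp
  · rfl

lemma expMean_eq_s9 {σ : ℝ} (hσ : 0 < σ) : expMean σ = expMeasure σ⁻¹ := by
  rw [expMean, expMean_density_eq hσ, expMeasure, gammaMeasure]
  rfl

lemma expMean_isProb {σ : ℝ} (hσ : 0 < σ) : IsProbabilityMeasure (expMean σ) := by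
  rw [expMean_eq_s9 hσ]; exact isProbabilityMeasure_expMeasure (inv_pos.2 hσ)

lemma expMean_Ici {σ : ℝ} (hσ : 0 < σ) {t : ℝ} (ht : 0 ≤ t) :
    expMean σ (Ici t) = ENNReal.ofReal (Real.exp (-(t / σ))) := by
  have hprob := expMean_isProb hσ
  have hIio : expMean σ (Iio t) = ENNReal.ofReal (1 - Real.exp (-(σ⁻¹ * t))) := by
    rw [expMean_eq_s9 hσ, expMeasure, gammaMeasure,
      withDensity_apply _ measurableSet_Iio]
    have : ∫⁻ y in Iio t, gammaPDF 1 σ⁻¹ y = ∫⁻ y in Iic t, gammaPDF 1 σ⁻¹ y :=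
      setLIntegral_congr Iio_ae_eq_Iic
    rw [this]
    have := lintegral_exponentialPDF_eq_antiDeriv (r := σ⁻¹) (inv_pos.2 hσ) t
    simp only [exponentialPDF, exponentialPDFReal, gammaPDF] at this ⊢
    rw [this, if_pos ht]
  have hcompl : Ici t = (Iio t)ᶜ := by simp
  rw [hcompl, measure_compl measurableSet_Iio (measure_ne_top _ _), hIio, measure_univ]
  have h1 : Real.exp (-(σ⁻¹ * t)) ≤ 1 := by
    apply Real.exp_le_one_iff.2
    simp only [Left.neg_nonpos_iff]
    positivity
  rw [← ENNReal.ofReal_one, ← ENNReal.ofReal_sub _ (by linarith [Real.exp_pos (-(σ⁻¹ * t))])]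
  congr 1
  · have : -(t / σ) = -(σ⁻¹ * t) := by field_simp
    rw [this]; ring

lemma expMean_Iio_zero {σ : ℝ} : expMean σ (Iio 0) = 0 := by
  rw [expMean, withDensity_apply _ measurableSet_Iio]
  rw [setLIntegral_congr_fun_ae measurableSet_Iio
    (ae_of_all _ (fun x (hx : x < 0) => by rw [if_neg (not_le.2 hx), ENNReal.ofReal_zero]))]
  simp

lemma expMean_ae_nonneg {σ : ℝ} : ∀ᵐ x ∂(expMean σ), 0 ≤ x := by
  rw [ae_iff]
  have hs : {a : ℝ | ¬ 0 ≤ a} = Iio 0 := by ext x; simp [not_le]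
  rw [hs, expMean, withDensity_apply _ measurableSet_Iio]
  rw [setLIntegral_congr_fun_ae measurableSet_Iio
    (ae_of_all _ (fun x (hx : x < 0) => by rw [if_neg (not_le.2 hx), ENNReal.ofReal_zero]))]
  simp

lemma lintegral_exp_rate {k c : ℝ} (hk : 0 < k) (hc : 0 ≤ c) :
    ∫⁻ x : ℝ, ENNReal.ofReal (if 0 ≤ x then c * Real.exp (-(k * x)) else 0)
      = ENNReal.ofReal (c / k) := by
  have h : ∀ x : ℝ, ENNReal.ofReal (if 0 ≤ x then c * Real.exp (-(k * x)) else 0)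
      = ENNReal.ofReal (c / k) * exponentialPDF k x := by
    intro x
    rw [exponentialPDF_eq, ← ENNReal.ofReal_mul (by positivity)]
    congr 1
    split_ifs with hx
    · field_simp
    · simp
  simp_rw [h]
  rw [lintegral_const_mul' _ _ ENNReal.ofReal_ne_top, lintegral_exponentialPDF_eq_one hk, mul_one]

set_option maxHeartbeats 1000000 in
/-- eq. (42): probability that the near user UE1 fails to decode
the far user's signal.  With `W1 = |ĥ1|²` and `E1 = |e1|²` independent
exponentials of means `σh1 = σ̂1²`, `σe1 = σ_{e1}²`, `λ_P = P2/P1 > γ̄2`,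
`χ = γ̄2/(λ_P − γ̄2)`, `ρ11 = P1·σ̂1²/N0`, `μ1 = (1 + χ·(1+λ_P)·σe1/σh1)⁻¹`:
`P{W1·P2/(W1·P1 + E1·(P1+P2) + N0) < γ̄2} = 1 − μ1·exp(−χ/ρ11)`. -/
theorem stmt_9 {Ω : Type*} [MeasurableSpace Ω] (P : Measure Ω) [IsProbabilityMeasure P]
    (W1 E1 : Ω → ℝ) (σh1 σe1 P1 P2 N0 γ2 : ℝ)
    (hσh1 : 0 < σh1) (hσe1 : 0 < σe1)
    (hP1 : 0 < P1) (hP2 : 0 < P2) (hN0 : 0 < N0) (hγ2 : 0 < γ2)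
    (hlam : γ2 < P2 / P1)
    (hind : IndepFun W1 E1 P)
    (hW1 : P.map W1 = expMean σh1) (hE1 : P.map E1 = expMean σe1)
    (lamP χ ρ11 μ1 : ℝ)
    (hlamP : lamP = P2 / P1) (hχ : χ = γ2 / (lamP - γ2))
    (hρ11 : ρ11 = P1 * σh1 / N0) (hμ1 : μ1 = (1 + χ * (1 + lamP) * σe1 / σh1)⁻¹) :
    (P {ω | W1 ω * P2 / (W1 ω * P1 + E1 ω * (P1 + P2) + N0) < γ2}).toReal =
      1 - μ1 * Real.exp (-χ / ρ11) := by
  have hc : 0 < P2 - γ2 * P1 := by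
    have := (lt_div_iff₀ hP1).mp hlam
    linarith
  set c := P2 - γ2 * P1 with hcdef
  set a := γ2 * (P1 + P2) / c with hadef
  set b := γ2 * N0 / c with hbdef
  have ha : 0 < a := div_pos (by positivity) hc
  have hb : 0 < b := div_pos (by positivity) hc
  have hPW := expMean_isProb hσh1
  have hPE := expMean_isProb hσe1
  have hWm : AEMeasurable W1 P := by
    by_contra h
    rw [Measure.map_of_not_aemeasurable h] at hW1
    have h1 : (expMean σh1) univ = 1 := measure_univ
    rw [← hW1] at h1
    simp at h1
  have hEm : AEMeasurable E1 P := by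
    by_contra h
    rw [Measure.map_of_not_aemeasurable h] at hE1
    have h1 : (expMean σe1) univ = 1 := measure_univ
    rw [← hE1] at h1
    simp at h1
  have hjoint : P.map (fun ω => (E1 ω, W1 ω)) = (expMean σe1).prod (expMean σh1) := by
    rw [← hE1, ← hW1]
    exact (indepFun_iff_map_prod_eq_prod_map_map hEm hWm).mp hind.symm
  set S : Set (ℝ × ℝ) := {p : ℝ × ℝ | p.2 * P2 / (p.2 * P1 + p.1 * (P1 + P2) + N0) < γ2}
    with hSdef
  have hS : MeasurableSet S := by
    apply measurableSet_lt _ measurable_const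
    fun_prop
  have hPev : P {ω | W1 ω * P2 / (W1 ω * P1 + E1 ω * (P1 + P2) + N0) < γ2}
      = ((expMean σe1).prod (expMean σh1)) S := by
    rw [← hjoint, Measure.map_apply_of_aemeasurable (hEm.prodMk hWm) hS]
    rfl
  have hinner : ∀ e : ℝ, 0 ≤ e →
      (expMean σh1) (Prod.mk e ⁻¹' Sᶜ) = ENNReal.ofReal (Real.exp (-((a * e + b) / σh1))) := by
    intro e he
    have hab : a * e + b = (γ2 * (P1 + P2) * e + γ2 * N0) / c := by
      rw [hadef, hbdef]; ring
    have habpos : 0 ≤ a * e + b := by positivity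
    have hset : (Prod.mk e ⁻¹' Sᶜ) ∩ Ici 0 = Ici (a * e + b) := by
      ext w
      simp only [hSdef, mem_inter_iff, mem_preimage, mem_compl_iff, mem_setOf_eq, mem_Ici, not_lt]
      constructor
      · rintro ⟨h1, h2⟩
        have hden : 0 < w * P1 + e * (P1 + P2) + N0 := by positivity
        rw [le_div_iff₀ hden] at h1
        rw [hab, div_le_iff₀ hc]
        nlinarith
      · intro h
        have hw0 : 0 ≤ w := le_trans habpos h
        refine ⟨?_, hw0⟩
        have hden : 0 < w * P1 + e * (P1 + P2) + N0 := by positivity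
        rw [le_div_iff₀ hden]
        rw [hab, div_le_iff₀ hc] at h
        nlinarith
    have hnull : (expMean σh1) (Ici (0:ℝ))ᶜ = 0 := by rw [compl_Ici]; exact expMean_Iio_zero
    rw [← measure_inter_conull (μ := expMean σh1) (s := Prod.mk e ⁻¹' Sᶜ) hnull, hset,
      expMean_Ici hσh1 habpos]
  set k := σe1⁻¹ + a / σh1 with hkdef
  have hk : 0 < k := by positivity
  have hScompl : ((expMean σe1).prod (expMean σh1)) Sᶜ
      = ENNReal.ofReal (σe1⁻¹ * Real.exp (-(b / σh1)) / k) := by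
    rw [Measure.prod_apply hS.compl]
    have h1 : ∫⁻ e, (expMean σh1) (Prod.mk e ⁻¹' Sᶜ) ∂(expMean σe1)
        = ∫⁻ e, ENNReal.ofReal (Real.exp (-((a * e + b) / σh1))) ∂(expMean σe1) := by
      apply lintegral_congr_ae
      filter_upwards [expMean_ae_nonneg (σ := σe1)] with e he
      exact hinner e he
    rw [h1, expMean, lintegral_withDensity_eq_lintegral_mul _
      (by rw [expMean_density_eq hσe1]
          exact (measurable_exponentialPDFReal σe1⁻¹).ennreal_ofReal)
      (Measurable.ennreal_ofReal (by fun_prop))]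
    have h2 : ∀ x : ℝ,
        (ENNReal.ofReal (if 0 ≤ x then (1 / σe1) * Real.exp (-x / σe1) else 0))
          * ENNReal.ofReal (Real.exp (-((a * x + b) / σh1)))
        = ENNReal.ofReal
            (if 0 ≤ x then (σe1⁻¹ * Real.exp (-(b / σh1))) * Real.exp (-(k * x)) else 0) := by
      intro x
      split_ifs with hx
      · rw [← ENNReal.ofReal_mul (by positivity)]
        congr 1
        rw [mul_assoc, mul_assoc, ← Real.exp_add, ← Real.exp_add, one_div, hkdef]
        congr 1
        field_simp
        ring
      · simp
    simp only [Pi.mul_apply]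
    simp_rw [h2]
    exact lintegral_exp_rate hk (by positivity)
  have hq : σe1⁻¹ * Real.exp (-(b / σh1)) / k = μ1 * Real.exp (-χ / ρ11) := by
    have hlg : 0 < lamP - γ2 := by rw [hlamP]; linarith
    have hlg' : lamP - γ2 = c / P1 := by
      rw [hlamP, hcdef]; field_simp [hP1.ne']
    have hχ' : χ = γ2 * P1 / c := by
      rw [hχ, hlg', div_div_eq_mul_div]
    have h1 : -(b / σh1) = -χ / ρ11 := by
      rw [hbdef, hχ', hρ11]
      field_simp [hc.ne', hσh1.ne', hP1.ne', hN0.ne']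
    have haχ : a = χ * (1 + lamP) := by
      rw [hadef, hχ', hlamP]
      field_simp [hc.ne', hP1.ne']
    have hd : 0 < 1 + a * σe1 / σh1 := by positivity
    have h2 : σe1⁻¹ / k = μ1 := by
      rw [hμ1, ← haχ, hkdef]
      rw [div_eq_iff (by positivity : (0:ℝ) < σe1⁻¹ + a / σh1).ne']
      field_simp [hσe1.ne', hσh1.ne', hd.ne']
    rw [h1, ← h2]
    ring
  have hprod : IsProbabilityMeasure ((expMean σe1).prod (expMean σh1)) := by infer_instance
  have hq1 : μ1 * Real.exp (-χ / ρ11) ≤ 1 := by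
    rw [← hq]
    have he1 : Real.exp (-(b / σh1)) ≤ 1 := by
      rw [Real.exp_le_one_iff]
      simp only [Left.neg_nonpos_iff]
      positivity
    have hr : σe1⁻¹ / k ≤ 1 := by
      rw [div_le_one hk, hkdef]
      nlinarith [div_pos ha hσh1]
    calc σe1⁻¹ * Real.exp (-(b / σh1)) / k
        = Real.exp (-(b / σh1)) * (σe1⁻¹ / k) := by ring
      _ ≤ 1 := mul_le_one₀ he1 (by positivity) hr
  have hq0 : 0 ≤ μ1 * Real.exp (-χ / ρ11) := by
    rw [← hq]; positivity
  have hfin : ((expMean σe1).prod (expMean σh1)) S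
      = 1 - ENNReal.ofReal (μ1 * Real.exp (-χ / ρ11)) := by
    rw [← compl_compl S, measure_compl hS.compl (measure_ne_top _ _), measure_univ, hScompl, hq]
  rw [hPev, hfin, ENNReal.toReal_sub_of_le (ENNReal.ofReal_le_one.mpr hq1) ENNReal.one_ne_top,
    ENNReal.toReal_one, ENNReal.toReal_ofReal hq0]
end
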